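/- Let L > 0, 0 ≤ T ≤ D and let p : ℝ → ℝ be integrable on [0, D] with 0 ≤ p(t) ≤ 1 for all t ∈ [0, D]. Suppose T ≤ D − L + ∫₀^T p(t) dt. Then ∫₀^T (1 − p(t)) dt ≤ D − L, and hence for every K ≥ 1, L + (K−1)·(L − ∫₀^T (1 − p(t)) dt) ≥ L·(1 + (K−1)·(2 − D/L)). -/
import Mathlib


open MeasureTheory

/-- Tight-deadline lower bound in the fluid model: if `T ≤ D − L + ∫₀^T p(t) dt`, then
`∫₀^T (1 − p(t)) dt ≤ D − L`, and hence for every `K ≥ 1`,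
`L + (K−1)(L − ∫₀^T (1 − p(t)) dt) ≥ L(1 + (K−1)(2 − D/L))`. -/
theorem stmt_13 (L T D : ℝ) (hL : 0 < L) (hT : 0 ≤ T) (hTD : T ≤ D)
    (p : ℝ → ℝ) (hint : IntervalIntegrable p volume 0 D)
    (hp : ∀ t ∈ Set.Icc (0 : ℝ) D, 0 ≤ p t ∧ p t ≤ 1)
    (hfeas : T ≤ D - L + ∫ t in (0 : ℝ)..T, p t) :
    (∫ t in (0 : ℝ)..T, (1 - p t)) ≤ D - L ∧
      ∀ K : ℝ, 1 ≤ K →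
        L * (1 + (K - 1) * (2 - D / L)) ≤
          L + (K - 1) * (L - ∫ t in (0 : ℝ)..T, (1 - p t)) := by
  have hintT : IntervalIntegrable p volume 0 T :=
    hint.mono_set (by
      rw [Set.uIcc_of_le hT, Set.uIcc_of_le (hT.trans hTD)]
      exact Set.Icc_subset_Icc le_rfl hTD)
  have key : (∫ t in (0 : ℝ)..T, (1 - p t)) ≤ D - L := by
    have : (∫ t in (0 : ℝ)..T, (1 - p t)) = T - ∫ t in (0 : ℝ)..T, p t := by
      rw [intervalIntegral.integral_sub intervalIntegrable_const hintT,
        intervalIntegral.integral_const]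
      simp
    rw [this]; linarith
  refine ⟨key, fun K hK => ?_⟩
  have h1 : L * (1 + (K - 1) * (2 - D / L)) = L + (K - 1) * (2 * L - D) := by
    field_simp
  rw [h1]
  have : 2 * L - D ≤ L - ∫ t in (0 : ℝ)..T, (1 - p t) := by linarith
  nlinarith
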